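/- Let Ω ⊆ ℝ² be open with x > 0 at every point (x,y) ∈ Ω, and let w, u, s : Ω → ℝ be C² functions satisfying on Ω: w_xx + w_yy − w_x/x = 0, u_x = −w_y/x, u_y = w_x/x, s_x = −(w_x² − w_y²)/(2x), and s_y = −w_x w_y/x (subscripts denote partial derivatives). Define v := 1/cosh(u) and q := s + log(cosh(u)). Then on Ω: (i) w_xx + w_yy − w_x/x = −2(v_x w_x + v_y w_y)/v, (ii) v_xx + v_yy + v_x/x = (v_x² + v_y²)/v − v³(w_x² + w_y²)/x², (iii) q_x = −v_x/v + (x/(2v²))(v_x² − v_y²) − (v²/(2x))(w_x² − w_y²), (iv) q_y = −v_y/v + x v_x v_y/v² − v² w_x w_y/x, and (v) v_x w_x + v_y w_y = 0. -/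

import Mathlib

/-- Partial derivative with respect to the first coordinate of `ℝ × ℝ`. -/
noncomputable def pdx (f : ℝ × ℝ → ℝ) (p : ℝ × ℝ) : ℝ := fderiv ℝ f p (1, 0)

/-- Partial derivative with respect to the second coordinate of `ℝ × ℝ`. -/
noncomputable def pdy (f : ℝ × ℝ → ℝ) (p : ℝ × ℝ) : ℝ := fderiv ℝ f p (0, 1)

set_option maxHeartbeats 1000000 in
/-- **Every solution of the reduced linear system yields a Papapetrou vacuum.**
If `(w, u, s)` solves `w_xx + w_yy − w_x/x = 0`, `u_x = −w_y/x`, `u_y = w_x/x`,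
`s_x = −(w_x² − w_y²)/(2x)`, `s_y = −w_x w_y/x` on `Ω ⊆ {x > 0}`, then
`v := 1/cosh u` and `q := s + log cosh u` satisfy the reduced vacuum Einstein
equations (i)–(iv) together with Papapetrou's condition (v). -/
theorem reduced_system_gives_papapetrou
    (Ω : Set (ℝ × ℝ)) (hΩ : IsOpen Ω) (hx : ∀ p ∈ Ω, 0 < p.1)
    (w u s : ℝ × ℝ → ℝ)
    (hw : ContDiffOn ℝ 2 w Ω) (hu : ContDiffOn ℝ 2 u Ω) (hs : ContDiffOn ℝ 2 s Ω)
    (hweq : ∀ p ∈ Ω, pdx (pdx w) p + pdy (pdy w) p - pdx w p / p.1 = 0)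
    (hux : ∀ p ∈ Ω, pdx u p = -pdy w p / p.1)
    (huy : ∀ p ∈ Ω, pdy u p = pdx w p / p.1)
    (hsx : ∀ p ∈ Ω, pdx s p = -((pdx w p) ^ 2 - (pdy w p) ^ 2) / (2 * p.1))
    (hsy : ∀ p ∈ Ω, pdy s p = -(pdx w p * pdy w p) / p.1)
    (v q : ℝ × ℝ → ℝ)
    (hv : ∀ p : ℝ × ℝ, v p = 1 / Real.cosh (u p))
    (hq : ∀ p : ℝ × ℝ, q p = s p + Real.log (Real.cosh (u p))) :
    ∀ p ∈ Ω,
      (pdx (pdx w) p + pdy (pdy w) p - pdx w p / p.1 =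
        -2 * (pdx v p * pdx w p + pdy v p * pdy w p) / v p) ∧
      (pdx (pdx v) p + pdy (pdy v) p + pdx v p / p.1 =
        ((pdx v p) ^ 2 + (pdy v p) ^ 2) / v p -
          (v p) ^ 3 * ((pdx w p) ^ 2 + (pdy w p) ^ 2) / p.1 ^ 2) ∧
      (pdx q p = -pdx v p / v p + (p.1 / (2 * (v p) ^ 2)) * ((pdx v p) ^ 2 - (pdy v p) ^ 2)
        - ((v p) ^ 2 / (2 * p.1)) * ((pdx w p) ^ 2 - (pdy w p) ^ 2)) ∧
      (pdy q p = -pdy v p / v p + p.1 * pdx v p * pdy v p / (v p) ^ 2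
        - (v p) ^ 2 * pdx w p * pdy w p / p.1) ∧
      (pdx v p * pdx w p + pdy v p * pdy w p = 0) := by
  intro p hp
  have hmem : Ω ∈ nhds p := hΩ.mem_nhds hp
  have hX0 : p.1 ≠ 0 := (hx p hp).ne'
  have hch0 : ∀ z : ℝ × ℝ, Real.cosh (u z) ≠ 0 := fun z => (Real.cosh_pos _).ne'
  have hudiff : ∀ z ∈ Ω, DifferentiableAt ℝ u z := fun z hz =>
    (hu.contDiffAt (hΩ.mem_nhds hz)).differentiableAt (by norm_num)
  have hveq : v = fun z => (Real.cosh (u z))⁻¹ := funext fun z => by rw [hv z, one_div]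
  -- first derivatives of v on Ω
  have hvHas : ∀ z ∈ Ω, HasFDerivAt v
      ((-(Real.cosh (u z) ^ 2)⁻¹) • (Real.sinh (u z) • fderiv ℝ u z)) z := by
    intro z hz
    rw [hveq]
    exact (hasDerivAt_inv (hch0 z)).comp_hasFDerivAt z (hudiff z hz).hasFDerivAt.cosh
  have hpdxvΩ : ∀ z ∈ Ω, pdx v z =
      Real.sinh (u z) * pdy w z * ((Real.cosh (u z) * Real.cosh (u z)) * z.1)⁻¹ := by
    intro z hz
    have h1 : pdx v z =
        (-(Real.cosh (u z) ^ 2)⁻¹) * (Real.sinh (u z) * (fderiv ℝ u z (1, 0))) := by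
      rw [pdx, (hvHas z hz).fderiv]
      simp [smul_eq_mul]
    have h2 : fderiv ℝ u z (1, 0) = -pdy w z / z.1 := hux z hz
    have hz1 : z.1 ≠ 0 := (hx z hz).ne'
    rw [h1, h2]
    ring
  have hpdyvΩ : ∀ z ∈ Ω, pdy v z =
      -(Real.sinh (u z) * pdx w z * ((Real.cosh (u z) * Real.cosh (u z)) * z.1)⁻¹) := by
    intro z hz
    have h1 : pdy v z =
        (-(Real.cosh (u z) ^ 2)⁻¹) * (Real.sinh (u z) * (fderiv ℝ u z (0, 1))) := by
      rw [pdy, (hvHas z hz).fderiv]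
      simp [smul_eq_mul]
    have h2 : fderiv ℝ u z (0, 1) = pdx w z / z.1 := huy z hz
    have hz1 : z.1 ≠ 0 := (hx z hz).ne'
    rw [h1, h2]
    ring
  -- abbreviations (as local notations via `set`)
  set ch := Real.cosh (u p) with hch
  set sh := Real.sinh (u p) with hsh
  set a := pdx w p with ha
  set b := pdy w p with hb
  set X := p.1 with hXdef
  have hid : ch ^ 2 - sh ^ 2 = 1 := Real.cosh_sq_sub_sinh_sq (u p)
  have hch0' : ch ≠ 0 := hch0 p
  -- clean scalar values of first derivatives at p
  have hvx : pdx v p = sh * b / (ch ^ 2 * X) := by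
    rw [hpdxvΩ p hp]; ring
  have hvy : pdy v p = -(sh * a) / (ch ^ 2 * X) := by
    rw [hpdyvΩ p hp]; ring
  have hvp : v p = ch⁻¹ := by rw [hv p, one_div]
  -- q derivatives
  have hUp : HasFDerivAt u (fderiv ℝ u p) p := (hudiff p hp).hasFDerivAt
  have hsdiff : DifferentiableAt ℝ s p :=
    (hs.contDiffAt hmem).differentiableAt (by norm_num)
  have hqeq : q = fun z => s z + Real.log (Real.cosh (u z)) := funext hq
  have hqHas : HasFDerivAt q
      (fderiv ℝ s p + ch⁻¹ • (sh • fderiv ℝ u p)) p := by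
    rw [hqeq]
    exact hsdiff.hasFDerivAt.add (hUp.cosh.log (hch0 p))
  have hDu10 : fderiv ℝ u p (1, 0) = -b / X := hux p hp
  have hDu01 : fderiv ℝ u p (0, 1) = a / X := huy p hp
  have hqx : pdx q p = pdx s p - sh * b / (ch * X) := by
    have h1 : pdx q p = fderiv ℝ s p (1, 0) + ch⁻¹ * (sh * (fderiv ℝ u p (1, 0))) := by
      rw [pdx, hqHas.fderiv]; simp [smul_eq_mul]
    rw [h1, hDu10]
    rw [show fderiv ℝ s p (1, 0) = pdx s p from rfl]
    field_simp
    try ring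
  have hqy : pdy q p = pdy s p + sh * a / (ch * X) := by
    have h1 : pdy q p = fderiv ℝ s p (0, 1) + ch⁻¹ * (sh * (fderiv ℝ u p (0, 1))) := by
      rw [pdy, hqHas.fderiv]; simp [smul_eq_mul]
    rw [h1, hDu01]
    rw [show fderiv ℝ s p (0, 1) = pdy s p from rfl]
    field_simp
    try ring
  -- second derivative machinery for w
  have hw1 : ContDiffAt ℝ 1 (fderiv ℝ w) p := (hw.contDiffAt hmem).fderiv_right (by norm_num)
  have hD2 : HasFDerivAt (fderiv ℝ w) (fderiv ℝ (fderiv ℝ w) p) p :=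
    (hw1.differentiableAt (by norm_num)).hasFDerivAt
  set D2 := fderiv ℝ (fderiv ℝ w) p with hD2def
  have hpyw : HasFDerivAt (pdy w) (D2.flip (0, 1)) p := by
    have h2 : HasFDerivAt (fun y => fderiv ℝ w y (0, 1)) (D2.flip (0, 1)) p := by
      simpa using hD2.clm_apply (hasFDerivAt_const ((0 : ℝ), (1 : ℝ)) p)
    exact h2
  have hpxw : HasFDerivAt (pdx w) (D2.flip (1, 0)) p := by
    have h2 : HasFDerivAt (fun y => fderiv ℝ w y (1, 0)) (D2.flip (1, 0)) p := by
      simpa using hD2.clm_apply (hasFDerivAt_const ((1 : ℝ), (0 : ℝ)) p)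
    exact h2
  have hsymm : D2 (0, 1) (1, 0) = D2 (1, 0) (0, 1) :=
    (((hw.contDiffAt hmem).isSymmSndFDerivAt (by simp [minSmoothness_of_isRCLikeNormedField])).eq _ _)
  set m := D2 (1, 0) (0, 1) with hm
  -- second derivatives of v
  have hMne : (Real.cosh (u p) * Real.cosh (u p)) * p.1 ≠ 0 :=
    mul_ne_zero (mul_ne_zero (hch0 p) (hch0 p)) hX0
  have hMHas : HasFDerivAt (fun z => (Real.cosh (u z) * Real.cosh (u z)) * z.1)
      ((Real.cosh (u p) * Real.cosh (u p)) • (ContinuousLinearMap.fst ℝ ℝ ℝ) +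
        p.1 • (Real.cosh (u p) • (Real.sinh (u p) • fderiv ℝ u p) +
          Real.cosh (u p) • (Real.sinh (u p) • fderiv ℝ u p))) p :=
    (hUp.cosh.mul hUp.cosh).mul hasFDerivAt_fst
  have hMinv := (hasDerivAt_inv hMne).comp_hasFDerivAt p hMHas
  have hF1 : HasFDerivAt
      (fun z => Real.sinh (u z) * pdy w z * ((Real.cosh (u z) * Real.cosh (u z)) * z.1)⁻¹)
      _ p := (hUp.sinh.mul hpyw).mul hMinv
  have hF2 : HasFDerivAt
      (fun z => -(Real.sinh (u z) * pdx w z * ((Real.cosh (u z) * Real.cosh (u z)) * z.1)⁻¹))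
      _ p := ((hUp.sinh.mul hpxw).mul hMinv).neg
  have hEx : pdx v =ᶠ[nhds p]
      (fun z => Real.sinh (u z) * pdy w z * ((Real.cosh (u z) * Real.cosh (u z)) * z.1)⁻¹) :=
    Filter.eventuallyEq_of_mem hmem hpdxvΩ
  have hEy : pdy v =ᶠ[nhds p]
      (fun z => -(Real.sinh (u z) * pdx w z * ((Real.cosh (u z) * Real.cosh (u z)) * z.1)⁻¹)) :=
    Filter.eventuallyEq_of_mem hmem hpdyvΩ
  have hA : pdx (pdx v) p =
      -(b ^ 2) / (ch * X ^ 2) + 2 * sh ^ 2 * b ^ 2 / (ch ^ 3 * X ^ 2)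
        + sh * m / (ch ^ 2 * X) - sh * b / (ch ^ 2 * X ^ 2) := by
    have e1 : pdx (pdx v) p = fderiv ℝ
        (fun z => Real.sinh (u z) * pdy w z * ((Real.cosh (u z) * Real.cosh (u z)) * z.1)⁻¹)
        p (1, 0) := by
      rw [pdx, hEx.fderiv_eq]
    rw [e1, hF1.fderiv]
    simp only [ContinuousLinearMap.add_apply, ContinuousLinearMap.smul_apply, smul_eq_mul,
      ContinuousLinearMap.coe_fst', ContinuousLinearMap.flip_apply, Function.comp, hDu10]
    simp only [Pi.mul_apply, ← hch, ← hsh, ← hXdef, ← ha, ← hb, ← hm]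
    field_simp
    ring
  have hB : pdy (pdy v) p =
      2 * sh ^ 2 * a ^ 2 / (ch ^ 3 * X ^ 2) - sh * m / (ch ^ 2 * X)
        - a ^ 2 / (ch * X ^ 2) := by
    have e1 : pdy (pdy v) p = fderiv ℝ
        (fun z => -(Real.sinh (u z) * pdx w z * ((Real.cosh (u z) * Real.cosh (u z)) * z.1)⁻¹))
        p (0, 1) := by
      rw [pdy, hEy.fderiv_eq]
    rw [e1, hF2.fderiv]
    simp only [ContinuousLinearMap.neg_apply, ContinuousLinearMap.add_apply,
      ContinuousLinearMap.smul_apply, smul_eq_mul,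
      ContinuousLinearMap.coe_fst', ContinuousLinearMap.flip_apply, Function.comp, hDu01, hsymm]
    simp only [Pi.mul_apply, ← hch, ← hsh, ← hXdef, ← ha, ← hb, ← hm]
    field_simp
    ring
  -- the five equations
  have hPap : pdx v p * pdx w p + pdy v p * pdy w p = 0 := by
    rw [hvx, hvy]
    field_simp
    ring
  refine ⟨?_, ?_, ?_, ?_, hPap⟩
  · rw [hweq p hp, hPap]
    simp
  · rw [hA, hB, hvx, hvy, hvp]
    field_simp
    linear_combination (-(a ^ 2 + b ^ 2)) * hid
  · rw [hqx, hvx, hvy, hvp, hsx p hp]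
    simp only [← hch, ← hsh, ← hXdef, ← ha, ← hb]
    field_simp
    linear_combination (-(a ^ 2 - b ^ 2)) * hid
  · rw [hqy, hvx, hvy, hvp, hsy p hp]
    simp only [← hch, ← hsh, ← hXdef, ← ha, ← hb]
    field_simp
    linear_combination (-(a * b)) * hid
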